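/- Let p : ℂ → ℂ be holomorphic with p(−z) = −p(z) and p(conj(z)) = conj(p(z)) for all z ∈ ℂ, and let K : ℂ → ℂ be continuous with K(−z) = K(z) and K(conj(z)) = conj(K(z)) for all z ∈ ℂ. Let γ : [0,1] → ℂ be a continuously differentiable path satisfying γ(1−t) = −conj(γ(t)) for all t ∈ [0,1] (the contour C). Suppose ρ : ℂ → ℂ is continuous and satisfies 2π·ρ(α) = p'(α) − ∫_C K(α−β)·ρ(β) dβ for all α ∈ ℂ. Then the function ρ̃(α) := conj( ρ(−conj(α)) ) satisfies the same integral equation: 2π·ρ̃(α) = p'(α) − ∫_C K(α−β)·ρ̃(β) dβ for all α ∈ ℂ. -/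

import Mathlib

open Complex MeasureTheory intervalIntegral Set

/-- If `p` is holomorphic with real symmetry, then so is its derivative. -/
lemma aux_deriv_conj_conj (p : ℂ → ℂ) (hpd : Differentiable ℂ p)
    (hpconj : ∀ z : ℂ, p ((starRingEnd ℂ) z) = (starRingEnd ℂ) (p z)) (z : ℂ) :
    deriv p ((starRingEnd ℂ) z) = (starRingEnd ℂ) (deriv p z) := by
  have h1 : Filter.Tendsto (slope p ((starRingEnd ℂ) z))
      (nhdsWithin ((starRingEnd ℂ) z) {((starRingEnd ℂ) z)}ᶜ)
      (nhds (deriv p ((starRingEnd ℂ) z))) :=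
    hasDerivAt_iff_tendsto_slope.mp (hpd _).hasDerivAt
  have h2 : Filter.Tendsto (fun w : ℂ => (starRingEnd ℂ) w) (nhdsWithin z {z}ᶜ)
      (nhdsWithin ((starRingEnd ℂ) z) {((starRingEnd ℂ) z)}ᶜ) := by
    apply ContinuousWithinAt.tendsto_nhdsWithin (Complex.continuous_conj.continuousWithinAt)
    intro w hw
    simp only [Set.mem_compl_iff, Set.mem_singleton_iff] at *
    exact fun h => hw ((starRingEnd ℂ).injective h)
  have h3 := (Complex.continuous_conj.tendsto _).comp (h1.comp h2)
  have hpc : ∀ w, (starRingEnd ℂ) (p ((starRingEnd ℂ) w)) = p w := fun w => by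
    rw [hpconj, Complex.conj_conj]
  have heq : (⇑(starRingEnd ℂ) ∘ slope p ((starRingEnd ℂ) z) ∘ fun w => (starRingEnd ℂ) w)
      = slope p z := by
    funext w
    simp only [Function.comp_apply, slope_def_field, map_div₀, map_sub, hpc, Complex.conj_conj]
  rw [heq] at h3
  have h4 : HasDerivAt p ((starRingEnd ℂ) (deriv p ((starRingEnd ℂ) z))) z :=
    hasDerivAt_iff_tendsto_slope.mpr h3
  rw [h4.deriv, Complex.conj_conj]

/-- The derivative of an odd function is even. -/
lemma aux_deriv_even (p : ℂ → ℂ) (hpodd : ∀ z : ℂ, p (-z) = -p z) (z : ℂ) :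
    deriv p (-z) = deriv p z := by
  have h : (fun z : ℂ => p (-z)) = fun z => -p z := funext hpodd
  have h1 : deriv (fun z : ℂ => p (-z)) z = -deriv p (-z) := deriv_comp_neg p z
  have h2 : deriv (fun z : ℂ => -p z) z = -deriv p z := deriv.neg
  rw [h] at h1
  rw [h1] at h2
  exact neg_injective h2

/-- Contour integral of `f` along the path `γ : [0,1] → ℂ`:
`∫_C f(β) dβ := ∫₀¹ f(γ(t)) γ'(t) dt`. -/
noncomputable def cInt (γ : ℝ → ℂ) (f : ℂ → ℂ) : ℂ :=
  ∫ t in (0:ℝ)..1, f (γ t) * deriv γ t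

/-- the symmetry `ρ(α)* = ρ(−α*)` of the density of Bethe roots: if `p` is
holomorphic, odd, with real symmetry, `K` is continuous, even, with real symmetry, the
contour satisfies `γ(1−t) = −conj(γ(t))`, and `ρ` is continuous and solves
`2πρ(α) = p'(α) − ∫_C K(α−β)ρ(β)dβ`, then `ρ̃(α) = conj(ρ(−conj α))` solves the same
equation. -/
theorem stmt_19 (p : ℂ → ℂ) (hpd : Differentiable ℂ p)
    (hpodd : ∀ z : ℂ, p (-z) = -p z)
    (hpconj : ∀ z : ℂ, p ((starRingEnd ℂ) z) = (starRingEnd ℂ) (p z))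
    (K : ℂ → ℂ) (hKc : Continuous K)
    (hKeven : ∀ z : ℂ, K (-z) = K z)
    (hKconj : ∀ z : ℂ, K ((starRingEnd ℂ) z) = (starRingEnd ℂ) (K z))
    (γ : ℝ → ℂ) (hγ : ContDiff ℝ 1 γ)
    (hsym : ∀ t ∈ Set.Icc (0:ℝ) 1, γ (1 - t) = -(starRingEnd ℂ) (γ t))
    (ρ : ℂ → ℂ) (hρc : Continuous ρ)
    (hρeq : ∀ α : ℂ,
      2 * (Real.pi : ℂ) * ρ α = deriv p α - cInt γ (fun β => K (α - β) * ρ β))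
    (ρt : ℂ → ℂ)
    (hρt : ∀ α : ℂ, ρt α = (starRingEnd ℂ) (ρ (-(starRingEnd ℂ) α))) :
    ∀ α : ℂ,
      2 * (Real.pi : ℂ) * ρt α = deriv p α - cInt γ (fun β => K (α - β) * ρt β) := by
  intro α
  have hγc : Continuous γ := hγ.continuous
  have hγ' : Continuous (deriv γ) := hγ.continuous_deriv le_rfl
  -- derivative symmetry of the contour
  have hdγ : ∀ t ∈ Set.Ioo (0:ℝ) 1, deriv γ (1 - t) = (starRingEnd ℂ) (deriv γ t) := by
    intro t ht
    have hev : (fun s => γ (1 - s)) =ᶠ[nhds t] fun s => -((starRingEnd ℂ) (γ s)) := by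
      filter_upwards [Ioo_mem_nhds ht.1 ht.2] with s hs
      exact hsym s (Ioo_subset_Icc_self hs)
    have h1 : deriv (fun s => γ (1 - s)) t = -deriv γ (1 - t) := deriv_comp_const_sub γ 1 t
    have hd : HasDerivAt (fun s => -((starRingEnd ℂ) (γ s))) (-((starRingEnd ℂ) (deriv γ t))) t := by
      simpa only [starRingEnd_apply, Pi.neg_def] using ((hγ.differentiable one_ne_zero t).hasDerivAt.star).neg
    have h2 := hev.deriv_eq
    rw [h1, hd.deriv] at h2
    exact neg_injective h2
  -- the equation at -conj α, conjugated
  have key := congrArg (starRingEnd ℂ) (hρeq (-((starRingEnd ℂ) α)))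
  rw [map_sub, map_mul, map_mul] at key
  -- LHS
  rw [← hρt α] at key
  -- p' term
  have hp' : (starRingEnd ℂ) (deriv p (-((starRingEnd ℂ) α))) = deriv p α := by
    have : (-((starRingEnd ℂ) α)) = (starRingEnd ℂ) (-α) := by simp
    rw [this, aux_deriv_conj_conj p hpd hpconj, Complex.conj_conj, aux_deriv_even p hpodd]
  rw [hp'] at key
  -- integral term
  have hint : (starRingEnd ℂ) (cInt γ (fun β => K (-((starRingEnd ℂ) α) - β) * ρ β))
      = cInt γ (fun β => K (α - β) * ρt β) := by
    unfold cInt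
    have hInt : IntervalIntegrable
        (fun t => K (-((starRingEnd ℂ) α) - γ t) * ρ (γ t) * deriv γ t) volume 0 1 :=
      (((hKc.comp (continuous_const.sub hγc)).mul (hρc.comp hγc)).mul hγ').intervalIntegrable 0 1
    have hcc := (Complex.conjCLE.toContinuousLinearMap.intervalIntegral_comp_comm hInt).symm
    simp only [ContinuousLinearEquiv.coe_coe, Complex.conjCLE_apply] at hcc
    show (starRingEnd ℂ) (∫ t in (0:ℝ)..1, K (-((starRingEnd ℂ) α) - γ t) * ρ (γ t) * deriv γ t)
      = ∫ t in (0:ℝ)..1, K (α - γ t) * ρt (γ t) * deriv γ t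
    rw [hcc]
    have hstep : (∫ t in (0:ℝ)..1,
        (starRingEnd ℂ) (K (-((starRingEnd ℂ) α) - γ t) * ρ (γ t) * deriv γ t))
        = ∫ t in (0:ℝ)..1, (fun s => K (α - γ s) * ρt (γ s) * deriv γ s) (1 - t) := by
      apply intervalIntegral.integral_congr_ae
      have hone : ∀ᵐ t : ℝ, t ∉ ({1} : Set ℝ) :=
        measure_eq_zero_iff_ae_notMem.mp (by simp)
      filter_upwards [hone] with t ht1 htu
      have ht : t ∈ Set.Ioo (0:ℝ) 1 := by
        rw [Set.uIoc_of_le zero_le_one] at htu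
        exact ⟨htu.1, lt_of_le_of_ne htu.2 (by simpa using ht1)⟩
      have h1 : (starRingEnd ℂ) (K (-((starRingEnd ℂ) α) - γ t)) = K (α - γ (1 - t)) := by
        rw [← hKconj, map_sub, map_neg, Complex.conj_conj, hsym t (Set.Ioo_subset_Icc_self ht),
          show -α - (starRingEnd ℂ) (γ t) = -(α + (starRingEnd ℂ) (γ t)) by ring, hKeven,
          sub_neg_eq_add]
      have h2 : (starRingEnd ℂ) (ρ (γ t)) = ρt (γ (1 - t)) := by
        rw [hρt, hsym t (Set.Ioo_subset_Icc_self ht)]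
        simp
      have h3 : (starRingEnd ℂ) (deriv γ t) = deriv γ (1 - t) := (hdγ t ht).symm
      show (starRingEnd ℂ) (K (-((starRingEnd ℂ) α) - γ t) * ρ (γ t) * deriv γ t)
        = K (α - γ (1 - t)) * ρt (γ (1 - t)) * deriv γ (1 - t)
      rw [map_mul, map_mul, h1, h2, h3]
    rw [hstep, intervalIntegral.integral_comp_sub_left (fun s => K (α - γ s) * ρt (γ s) * deriv γ s) 1]
    norm_num
  rw [hint] at key
  simpa only [map_ofNat, Complex.conj_ofReal] using key
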